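/- Let Δ act simply transitively on S, χ a character of Δ, and consider the O-bilinear pairing on M = ⊕_{v∈S}O·v given by (Σa_v v, Σb_v v) ↦ Σ_v a_v b_v. Then for x ∈ e_χM and y ∈ e_{χ^{-1}}M, the pairing value equals |Δ|·ξ_χ(x)·ξ_{χ^{-1}}(y), where ξ_χ, ξ_{χ^{-1}} are the v_0-coordinate projections; in particular the product ξ_χ(x)·ξ_{χ^{-1}}(y) is independent of the choice of base point v_0 ∈ S. -/
import Mathlib


/-- For `x` in the `χ`-component and `y` in the `χ⁻¹`-component of
`⊕_{v∈S} O·v` (`Δ` acting simply transitively on `S`), the coordinatewise pairing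
`Σ_v x_v y_v` equals `|Δ|·ξ_χ(x)·ξ_{χ⁻¹}(y) = |Δ|·x(v₀)·y(v₀)`; in particular
`x(v₁)·y(v₁)` is independent of the base point `v₁ ∈ S`. -/
theorem stmt9 {O Δ S : Type*} [CommRing O] [CommGroup Δ] [Fintype Δ] [Fintype S]
    [MulAction Δ S]
    (χ : Δ →* Oˣ) (v0 : S) (hfree : ∀ s : S, ∃! δ : Δ, δ • v0 = s)
    (x y : S → O)
    (hx : ∀ (δ : Δ) (s : S), x (δ⁻¹ • s) = (((χ δ)⁻¹ : Oˣ) : O) * x s)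
    (hy : ∀ (δ : Δ) (s : S), y (δ⁻¹ • s) = ((χ δ : Oˣ) : O) * y s) :
    (∑ s : S, x s * y s) = (Fintype.card Δ : O) * (x v0 * y v0) ∧
      ∀ v1 : S, x v1 * y v1 = x v0 * y v0 := by
  have key : ∀ s : S, x s * y s = x v0 * y v0 := by
    intro s
    obtain ⟨δ, hδ, -⟩ := hfree s
    have hs : s = δ⁻¹⁻¹ • v0 := by rw [inv_inv, hδ]
    rw [hs, hx δ⁻¹ v0, hy δ⁻¹ v0]
    have : (((χ δ⁻¹)⁻¹ : Oˣ) : O) * ((χ δ⁻¹ : Oˣ) : O) = 1 := by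
      norm_cast; simp
    rw [mul_mul_mul_comm, this, one_mul]
  have hbij : Function.Bijective (fun δ : Δ => δ • v0) := by
    constructor
    · intro a b hab
      obtain ⟨δ, hδ, hu⟩ := hfree (a • v0)
      rw [hu a rfl, hu b hab.symm]
    · intro s
      obtain ⟨δ, hδ, -⟩ := hfree s
      exact ⟨δ, hδ⟩
  have hcard : Fintype.card Δ = Fintype.card S := Fintype.card_of_bijective hbij
  constructor
  · rw [Finset.sum_congr rfl (fun s _ => key s), Finset.sum_const, hcard]
    simp [mul_comm, Finset.card_univ]
  · exact key
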